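/- Let ι be a finite nonempty type with cardinality K, let T ∈ ℕ, and let η > 0, β ≥ 0, γ ∈ (0, 1/2] be real numbers with (1 + β)·K·η ≤ γ. Let π : ι → ℝ satisfy π_i > 0 and Σ_i π_i = 1. Define recursively: Ĝ_{i,0} = 0; for t = 0, …, T−1, q_{t,i} = π_i·exp(η·Ĝ_{i,t}) / Σ_j π_j·exp(η·Ĝ_{j,t}), p_{t,i} = (1 − γ)·q_{t,i} + γ/K, and given estimates ĝ_{t} : ι → ℝ with 0 ≤ ĝ_{t,i} ≤ (1 + β)/p_{t,i} for all i, set Ĝ_{i,t+1} = Ĝ_{i,t} + ĝ_{t,i}. Then for every arm i*: −Σ_{t=0}^{T−1} Σ_i p_{t,i}·ĝ_{t,i} ≤ (1 + β)·η·K·(max_j Ĝ_{j,T}) − (1 − γ)·Ĝ_{i*,T} − ((1 − γ)/η)·log(π_{i*}). -/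

import Mathlib

open Finset

set_option maxHeartbeats 1000000 in
/-- Let `ι` be a finite nonempty type of cardinality `K`, `T ∈ ℕ`,
and `η > 0`, `β ≥ 0`, `γ ∈ (0, 1/2]` with `(1 + β) K η ≤ γ`. Let `π : ι → ℝ` be a
strictly positive distribution. Define recursively `Ĝ_{i,0} = 0`; for each `t < T`,
`q_{t,i} = π_i exp(η Ĝ_{i,t}) / ∑_j π_j exp(η Ĝ_{j,t})`,
`p_{t,i} = (1 − γ) q_{t,i} + γ/K`, and, given estimates `ĝ_t` with
`0 ≤ ĝ_{t,i} ≤ (1 + β)/p_{t,i}`, `Ĝ_{i,t+1} = Ĝ_{i,t} + ĝ_{t,i}`. Then for every arm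
`i*`:
`−∑_{t<T} ∑_i p_{t,i} ĝ_{t,i} ≤ (1 + β) η K (max_j Ĝ_{j,T}) − (1 − γ) Ĝ_{i*,T}
  − ((1 − γ)/η) log π_{i*}`. -/
theorem exp3p_cumulative_potential_inequality
    {ι : Type*} [Fintype ι] [Nonempty ι]
    (K : ℝ) (hK : K = (Fintype.card ι : ℝ))
    (T : ℕ) (η β γ : ℝ)
    (hη : 0 < η) (hβ : 0 ≤ β) (hγ0 : 0 < γ) (hγ1 : γ ≤ 1 / 2)
    (hcond : (1 + β) * K * η ≤ γ)
    (π : ι → ℝ) (hπ0 : ∀ i, 0 < π i) (hπ1 : ∑ i, π i = 1)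
    (G : ℕ → ι → ℝ) (q p ghat : ℕ → ι → ℝ)
    (hG0 : ∀ i, G 0 i = 0)
    (hq : ∀ t i, q t i =
      π i * Real.exp (η * G t i) / ∑ j, π j * Real.exp (η * G t j))
    (hp : ∀ t i, p t i = (1 - γ) * q t i + γ / K)
    (hghat : ∀ t, t < T → ∀ i, 0 ≤ ghat t i ∧ ghat t i ≤ (1 + β) / p t i)
    (hGrec : ∀ t i, G (t + 1) i = G t i + ghat t i) :
    ∀ istar : ι,
      -∑ t ∈ Finset.range T, ∑ i, p t i * ghat t i ≤
        (1 + β) * η * K * (⨆ j, G T j) - (1 - γ) * G T istar -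
          ((1 - γ) / η) * Real.log (π istar) := by
  intro istar
  have hγ2 : (0:ℝ) < 1 - γ := by linarith
  have hKpos : (0:ℝ) < K := by rw [hK]; exact_mod_cast Fintype.card_pos
  set W : ℕ → ℝ := fun t => ∑ j, π j * Real.exp (η * G t j) with hWdef
  have hWpos : ∀ t, 0 < W t := fun t =>
    Finset.sum_pos (fun j _ => mul_pos (hπ0 j) (Real.exp_pos _)) univ_nonempty
  have hqpos : ∀ t i, 0 < q t i := fun t i => by
    rw [hq]; exact div_pos (mul_pos (hπ0 i) (Real.exp_pos _)) (hWpos t)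
  have hppos : ∀ t i, 0 < p t i := fun t i => by
    rw [hp]; have := hqpos t i; positivity
  have hpγ : ∀ t i, γ / K ≤ p t i := fun t i => by
    rw [hp]; nlinarith [hqpos t i]
  have hqp : ∀ t i, (1 - γ) * q t i ≤ p t i := fun t i => by
    rw [hp]; have := div_pos hγ0 hKpos; linarith
  have hqsum : ∀ t, ∑ i, q t i = 1 := by
    intro t
    simp only [hq, ← Finset.sum_div]
    exact div_self (hWpos t).ne'
  -- per-step bound
  have key : ∀ t, t < T →
      Real.log (W (t + 1)) - Real.log (W t) ≤
        (η / (1 - γ)) * ∑ i, p t i * ghat t i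
          + (η ^ 2 * (1 + β) / (1 - γ)) * ∑ i, ghat t i := by
    intro t ht
    have hg := hghat t ht
    have hx1 : ∀ i, η * ghat t i ≤ 1 := by
      intro i
      have h1 : ghat t i ≤ (1 + β) / p t i := (hg i).2
      have h2 : (1 + β) / p t i ≤ (1 + β) / (γ / K) :=
        div_le_div_of_nonneg_left (by linarith) (div_pos hγ0 hKpos) (hpγ t i)
      have h3 : ghat t i * η ≤ ((1 + β) * K / γ) * η := by
        apply mul_le_mul_of_nonneg_right _ hη.le
        calc ghat t i ≤ (1 + β) / (γ / K) := h1.trans h2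
          _ = (1 + β) * K / γ := by field_simp
      calc η * ghat t i = ghat t i * η := mul_comm _ _
        _ ≤ ((1 + β) * K / γ) * η := h3
        _ = ((1 + β) * K * η) / γ := by ring
        _ ≤ 1 := by rw [div_le_one hγ0]; exact hcond
    have hpg1 : ∀ i, p t i * ghat t i ≤ 1 + β := by
      intro i
      have := (hg i).2
      rw [le_div_iff₀ (hppos t i)] at this
      linarith [this]
    have hWsucc : W (t + 1) = W t * ∑ i, q t i * Real.exp (η * ghat t i) := by
      rw [Finset.mul_sum]
      apply Finset.sum_congr rfl
      intro i _
      rw [hq, hGrec, mul_add, Real.exp_add]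
      field_simp [(hWpos t).ne']
      rw [mul_div_assoc, show W t / (∑ x, π x * Real.exp (η * G t x)) = 1 from
        div_self (hWpos t).ne', mul_one]
    have hspos : 0 < ∑ i, q t i * Real.exp (η * ghat t i) :=
      Finset.sum_pos (fun i _ => mul_pos (hqpos t i) (Real.exp_pos _)) univ_nonempty
    have hlogsplit : Real.log (W (t + 1)) - Real.log (W t)
        = Real.log (∑ i, q t i * Real.exp (η * ghat t i)) := by
      rw [hWsucc, Real.log_mul (hWpos t).ne' hspos.ne']; ring
    rw [hlogsplit]
    have hlog := Real.log_le_sub_one_of_pos hspos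
    have hterm : ∀ i ∈ Finset.univ (α := ι), q t i * Real.exp (η * ghat t i) ≤
        q t i + (η / (1 - γ)) * (p t i * ghat t i)
          + (η ^ 2 * (1 + β) / (1 - γ)) * ghat t i := by
      intro i _
      have hg0 : 0 ≤ ghat t i := (hg i).1
      have hxnn : 0 ≤ η * ghat t i := mul_nonneg hη.le hg0
      have hexp : Real.exp (η * ghat t i) ≤ 1 + η * ghat t i + (η * ghat t i) ^ 2 := by
        have habs : |η * ghat t i| ≤ 1 := by rw [abs_of_nonneg hxnn]; exact hx1 i
        have := Real.abs_exp_sub_one_sub_id_le habs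
        have := abs_le.mp this
        linarith [this.2]
      have h1 : q t i * Real.exp (η * ghat t i) ≤
          q t i * (1 + η * ghat t i + (η * ghat t i) ^ 2) :=
        mul_le_mul_of_nonneg_left hexp (hqpos t i).le
      refine h1.trans ?_
      have hq' := hqp t i
      have hpg := hpg1 i
      have piece1 : q t i * (η * ghat t i) ≤ (η / (1 - γ)) * (p t i * ghat t i) := by
        rw [div_mul_eq_mul_div, le_div_iff₀ hγ2]
        nlinarith [mul_le_mul_of_nonneg_right hq' (mul_nonneg hη.le hg0)]
      have piece2 : q t i * (η * ghat t i) ^ 2 ≤ (η ^ 2 * (1 + β) / (1 - γ)) * ghat t i := by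
        rw [div_mul_eq_mul_div, le_div_iff₀ hγ2]
        nlinarith [mul_le_mul_of_nonneg_right
            (mul_le_mul_of_nonneg_right hq' hg0) (mul_nonneg (sq_nonneg η) hg0),
          mul_le_mul_of_nonneg_right hpg (mul_nonneg (sq_nonneg η) hg0)]
      nlinarith [piece1, piece2]
    have hsum := Finset.sum_le_sum hterm
    rw [Finset.sum_add_distrib, Finset.sum_add_distrib, hqsum t,
      ← Finset.mul_sum, ← Finset.mul_sum] at hsum
    linarith [hlog, hsum]
  -- telescoping
  set S := ∑ t ∈ Finset.range T, ∑ i, p t i * ghat t i with hSdef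
  set R := ∑ t ∈ Finset.range T, ∑ i, ghat t i with hRdef
  have htel : Real.log (W T) - Real.log (W 0) ≤
      (η / (1 - γ)) * S + (η ^ 2 * (1 + β) / (1 - γ)) * R := by
    rw [← Finset.sum_range_sub (fun t => Real.log (W t)) T, hSdef, hRdef,
      Finset.mul_sum, Finset.mul_sum, ← Finset.sum_add_distrib]
    exact Finset.sum_le_sum fun t ht => key t (Finset.mem_range.mp ht)
  have hW0 : W 0 = 1 := by
    simp only [hWdef, hG0, mul_zero, Real.exp_zero, mul_one]; exact hπ1
  have hlower : Real.log (π istar) + η * G T istar ≤ Real.log (W T) := by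
    have h1 : π istar * Real.exp (η * G T istar) ≤ W T :=
      Finset.single_le_sum (f := fun j => π j * Real.exp (η * G T j))
        (fun j _ => (mul_pos (hπ0 j) (Real.exp_pos _)).le) (Finset.mem_univ istar)
    calc Real.log (π istar) + η * G T istar
        = Real.log (π istar * Real.exp (η * G T istar)) := by
          rw [Real.log_mul (hπ0 istar).ne' (Real.exp_pos _).ne', Real.log_exp]
      _ ≤ Real.log (W T) := Real.log_le_log (mul_pos (hπ0 istar) (Real.exp_pos _)) h1
  have hmain : Real.log (π istar) + η * G T istar ≤
      (η / (1 - γ)) * S + (η ^ 2 * (1 + β) / (1 - γ)) * R := by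
    rw [hW0, Real.log_one, sub_zero] at htel
    linarith [hlower, htel]
  -- R = ∑ i, G T i ≤ K * sup
  have hGsum : ∀ n i, G n i = ∑ t ∈ Finset.range n, ghat t i := by
    intro n i
    induction n with
    | zero => simp [hG0]
    | succ n ih => rw [Finset.sum_range_succ, ← ih, hGrec]
  have hRG : R = ∑ i, G T i := by
    rw [hRdef, Finset.sum_comm]
    exact Finset.sum_congr rfl fun i _ => (hGsum T i).symm
  have hsup : ∀ i, G T i ≤ ⨆ j, G T j := fun i =>
    le_ciSup (Set.Finite.bddAbove (Set.finite_range (G T))) i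
  have hRs : R ≤ K * (⨆ j, G T j) := by
    rw [hRG, hK]
    calc ∑ i, G T i ≤ ∑ _i : ι, (⨆ j, G T j) := Finset.sum_le_sum fun i _ => hsup i
      _ = (Fintype.card ι : ℝ) * (⨆ j, G T j) := by
        rw [Finset.sum_const, nsmul_eq_mul]; simp [Finset.card_univ]
  -- final algebra
  have h2 := mul_le_mul_of_nonneg_left hmain (le_of_lt (div_pos hγ2 hη))
  have heq1 : (1 - γ) / η * ((η / (1 - γ)) * S + (η ^ 2 * (1 + β) / (1 - γ)) * R)
      = S + η * (1 + β) * R := by field_simp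
  have heq2 : (1 - γ) / η * (Real.log (π istar) + η * G T istar)
      = (1 - γ) / η * Real.log (π istar) + (1 - γ) * G T istar := by field_simp
  rw [heq1, heq2] at h2
  have h3 : η * (1 + β) * R ≤ (1 + β) * η * K * (⨆ j, G T j) := by
    have h := mul_le_mul_of_nonneg_left hRs (mul_nonneg hη.le (by linarith : (0:ℝ) ≤ 1 + β))
    nlinarith [h]
  linarith [h2, h3]
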